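/- Let ℳ = (Δ, (I_k)_{k∈ℕ}) be a temporal interpretation that is stabilized from instant N onward, i.e. A^{I_k} = A^{I_N} for every concept name A and S^{I_k} = S^{I_N} for every role name S, for all k ≥ N. Then for every temporal concept D, the extension of D also stabilizes: D^{I_k} = D^{I_N} for all k ≥ N. -/
import Mathlib


/-- TDL-Lite roles: a role name `S ∈ N_R` (coded by a natural number) or its inverse `S⁻`. -/
inductive TRole : Type
  | name (S : ℕ)
  | inv  (S : ℕ)
deriving DecidableEq

/-- TDL-Lite temporal concepts: `⊥ | ⊤ | A | ∃R | ¬D | D₁ ⊓ D₂ | ◇_F D | □_F D`. -/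
inductive TConcept : Type
  | bot
  | top
  | atom (A : ℕ)
  | ex (R : TRole)
  | neg (C : TConcept)
  | inter (C D : TConcept)
  | dia (C : TConcept)
  | box (C : TConcept)
deriving DecidableEq

/-- A temporal interpretation: a fixed nonempty domain `Δ` together with, for each
instant `n`, an extension for every concept name and every role name. -/
structure TInterp (Δ : Type) : Type where
  nonempty : Nonempty Δ
  conc : ℕ → ℕ → Set Δ
  role : ℕ → ℕ → Set (Δ × Δ)

variable {Δ : Type}

/-- Semantics of roles at an instant. -/
def TInterp.rsem (M : TInterp Δ) (n : ℕ) : TRole → Set (Δ × Δ)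
  | .name S => M.role n S
  | .inv S  => {p | (p.2, p.1) ∈ M.role n S}

/-- Semantics of temporal concepts at an instant; `◇_F` and `□_F` quantify over the
strict future. -/
def TInterp.csem (M : TInterp Δ) : TConcept → ℕ → Set Δ
  | .bot, _ => ∅
  | .top, _ => Set.univ
  | .atom A, n => M.conc n A
  | .ex R, n => {d | ∃ d', (d, d') ∈ M.rsem n R}
  | .neg C, n => (M.csem C n)ᶜ
  | .inter C D, n => M.csem C n ∩ M.csem D n
  | .dia C, n => {d | ∃ k, n < k ∧ d ∈ M.csem C k}
  | .box C, n => {d | ∀ k, n < k → d ∈ M.csem C k}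

/-- `M` is stabilized from instant `N` onward: the extension of every concept name and of
every role name at any instant `k ≥ N` coincides with its extension at `N`. -/
def Stabilized (M : TInterp Δ) (N : ℕ) : Prop :=
  ∀ k : ℕ, N ≤ k → (∀ A : ℕ, M.conc k A = M.conc N A) ∧ (∀ S : ℕ, M.role k S = M.role N S)

/-- If a temporal interpretation is stabilized from instant `N` onward,
then the extension of every temporal concept also stabilizes from `N` onward. -/
theorem concept_extension_stabilizes (M : TInterp Δ) (N : ℕ) (hstab : Stabilized M N) :
    ∀ (D : TConcept) (k : ℕ), N ≤ k → M.csem D k = M.csem D N := by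
  intro D
  induction D with
  | bot => intro k hk; rfl
  | top => intro k hk; rfl
  | atom A => intro k hk; simp [TInterp.csem, (hstab k hk).1 A]
  | ex R =>
    intro k hk
    cases R with
    | name S => simp [TInterp.csem, TInterp.rsem, (hstab k hk).2 S]
    | inv S => simp [TInterp.csem, TInterp.rsem, (hstab k hk).2 S]
  | neg C ih => intro k hk; simp [TInterp.csem, ih k hk]
  | inter C D ihC ihD => intro k hk; simp [TInterp.csem, ihC k hk, ihD k hk]
  | dia C ih =>
    intro k hk
    ext d
    simp only [TInterp.csem, Set.mem_setOf_eq]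
    constructor
    · rintro ⟨j, hj, hd⟩
      exact ⟨j, lt_of_le_of_lt hk hj, hd⟩
    · rintro ⟨j, hj, hd⟩
      refine ⟨k + 1, Nat.lt_succ_self k, ?_⟩
      rw [ih (k+1) (by omega)]
      rwa [ih j (le_of_lt hj)] at hd
  | box C ih =>
    intro k hk
    ext d
    simp only [TInterp.csem, Set.mem_setOf_eq]
    constructor
    · intro h j hj
      have := h (max j (k+1)) (by omega)
      rw [ih (max j (k+1)) (by omega), ← ih j (le_of_lt hj)] at this
      exact this
    · intro h j hj
      rw [ih j (by omega)]
      rw [← ih (N+1) (by omega)]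
      exact h (N+1) (Nat.lt_succ_self N)
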